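/- Let F be a free group, φ ∈ Aut(F), and suppose P ≤ F is a non-trivial subgroup with φ^l(P) = a⁻¹ P a for some a ∈ F and l ≥ 1, and suppose (ad_{γ} ∘ φ^k) restricts to the identity on P for some γ ∈ F and some multiple k of l. Then the outer class of the automorphism ad_{a⁻¹} ∘ φ^l restricted to P has finite order (dividing k/l) in Out(P), provided P equals its own normalizer-intersection in the sense that any element of F conjugating P to itself and acting as (ad_{a⁻¹} ∘ φ^l)^{k/l} inverse lies in P. -/

import Mathlib

/-- let `F` be a free group, `φ ∈ Aut(F)`, `P ≤ F` non-trivial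
with `φ^l(P) = a⁻¹ P a` (`l ≥ 1`), and suppose `ad_γ ∘ φ^k` restricts to the
identity on `P` for some multiple `k` of `l`. If any element conjugating `P` to
itself lies in `P` (as holds for malnormal subgroups), then the restriction of
`ad_{a⁻¹} ∘ φ^l` to `P` is inner on `P` at the power `k/l`; i.e. its outer
class has finite order dividing `k/l`.
Here `ad_g x = g⁻¹ x g`, so `ad_{a⁻¹} ∘ φ^l = MulAut.conj a * φ^l` and the
conjugation `x ↦ a⁻¹ x a` is `MulAut.conj a⁻¹`. -/
theorem restriction_finite_order_in_out {ι : Type*}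
    (φ : MulAut (FreeGroup ι)) (P : Subgroup (FreeGroup ι)) (hP : P ≠ ⊥)
    (a γ : FreeGroup ι) (l k : ℕ) (hl : 1 ≤ l) (hlk : l ∣ k)
    (hmap : Subgroup.map (φ ^ l).toMonoidHom P
      = Subgroup.map (MulAut.conj a⁻¹).toMonoidHom P)
    (hγ : ∀ x ∈ P, γ⁻¹ * (φ ^ k) x * γ = x)
    (hmal : ∀ c : FreeGroup ι,
      Subgroup.map (MulAut.conj c).toMonoidHom P = P → c ∈ P) :
    ∃ p ∈ P, ∀ x ∈ P,
      ((MulAut.conj a * φ ^ l) ^ (k / l)) x = p⁻¹ * x * p := by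
  set ψ : MulAut (FreeGroup ι) := MulAut.conj a * φ ^ l with hψ
  have map_congr : ∀ (f g : FreeGroup ι →* FreeGroup ι), (∀ x ∈ P, f x = g x) →
      Subgroup.map f P = Subgroup.map g P := by
    intro f g h
    ext y
    simp only [Subgroup.mem_map]
    constructor
    · rintro ⟨x, hx, rfl⟩; exact ⟨x, hx, (h x hx).symm⟩
    · rintro ⟨x, hx, rfl⟩; exact ⟨x, hx, h x hx⟩
  -- conjugating form of powers of ψ
  have key : ∀ m : ℕ, ∃ b : FreeGroup ι, ∀ x,
      (ψ ^ m) x = b * (φ ^ (m * l)) x * b⁻¹ := by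
    intro m
    induction m with
    | zero => exact ⟨1, by simp⟩
    | succ n ih =>
      obtain ⟨b, hb⟩ := ih
      refine ⟨a * (φ ^ l) b, fun x => ?_⟩
      have h1 : (ψ ^ (n + 1)) x = ψ ((ψ ^ n) x) := by
        rw [pow_succ']; rfl
      have h2 : ((φ : MulAut (FreeGroup ι)) ^ ((n + 1) * l)) x
          = (φ ^ l) ((φ ^ (n * l)) x) := by
        rw [← MulAut.mul_apply, ← pow_add]
        ring_nf
      rw [h1, hb, h2, hψ]
      simp only [MulAut.mul_apply, MulAut.conj_apply, map_mul, map_inv]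
      group
  -- ψ maps P onto P
  have hmapψ : Subgroup.map ψ.toMonoidHom P = P := by
    have hcomp : ψ.toMonoidHom
        = (MulAut.conj a).toMonoidHom.comp (φ ^ l).toMonoidHom := by
      ext x; rfl
    rw [hcomp, ← Subgroup.map_map, hmap, Subgroup.map_map]
    have : (MulAut.conj a).toMonoidHom.comp (MulAut.conj a⁻¹).toMonoidHom
        = MonoidHom.id _ := by
      ext x
      simp [MulAut.conj_apply]
      group
    rw [this, Subgroup.map_id]
  have hmapψpow : ∀ m : ℕ, Subgroup.map (ψ ^ m).toMonoidHom P = P := by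
    intro m
    induction m with
    | zero =>
      have : (ψ ^ 0).toMonoidHom = MonoidHom.id _ := by ext x; simp
      rw [this, Subgroup.map_id]
    | succ n ih =>
      have hcomp : (ψ ^ (n + 1)).toMonoidHom
          = ψ.toMonoidHom.comp (ψ ^ n).toMonoidHom :=
        MonoidHom.ext fun x => by
          show (ψ ^ (n + 1)) x = ψ ((ψ ^ n) x)
          rw [pow_succ']; rfl
      rw [hcomp, ← Subgroup.map_map, ih, hmapψ]
  set m := k / l with hm
  have hml : m * l = k := Nat.div_mul_cancel hlk
  obtain ⟨b, hb⟩ := key m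
  have hagree : ∀ x ∈ P, (ψ ^ m) x = (b * γ) * x * (b * γ)⁻¹ := by
    intro x hx
    have hφk : (φ ^ k) x = γ * x * γ⁻¹ := by
      have := hγ x hx
      have : γ * (γ⁻¹ * (φ ^ k) x * γ) * γ⁻¹ = γ * x * γ⁻¹ := by rw [this]
      rw [← this]; group
    rw [hb, hml, hφk]
    group
  have hc : b * γ ∈ P := by
    apply hmal
    have : Subgroup.map (MulAut.conj (b * γ)).toMonoidHom P
        = Subgroup.map (ψ ^ m).toMonoidHom P := by
      apply map_congr
      intro x hx
      simp only [MulEquiv.coe_toMonoidHom]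
      rw [hagree x hx]
      simp only [MulAut.conj_apply, MulEquiv.coe_toMonoidHom]
    rw [this, hmapψpow]
  refine ⟨(b * γ)⁻¹, inv_mem hc, fun x hx => ?_⟩
  rw [hagree x hx]
  group
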